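/- Let p ∈ ℂ and r > 0 satisfy |p|² − r² = 1. Then the map z ↦ 1/conj(z) maps the circle {z ∈ ℂ : |z − p| = r} onto itself, and maps the closed disk {z ∈ ℂ : |z − p| ≤ r} onto itself. -/

import Mathlib

open Complex

lemma SU_key (p z : ℂ) (r : ℝ) (h : Complex.normSq p - r ^ 2 = 1) :
    Complex.normSq (1 - p * (starRingEnd ℂ) z) - r ^ 2 * Complex.normSq z
      = Complex.normSq (z - p) - r ^ 2 := by
  simp only [Complex.normSq_apply, Complex.sub_re, Complex.sub_im, Complex.mul_re,
    Complex.mul_im, Complex.one_re, Complex.one_im, Complex.conj_re, Complex.conj_im] at *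
  linear_combination (z.re ^ 2 + z.im ^ 2 - 1) * h

lemma SU_abs (p z : ℂ) (hz : z ≠ 0) :
    ‖((starRingEnd ℂ) z)⁻¹ - p‖
      = ‖1 - p * (starRingEnd ℂ) z‖ / ‖z‖ := by
  have hz' : (starRingEnd ℂ) z ≠ 0 := by simpa using hz
  have : ((starRingEnd ℂ) z)⁻¹ - p = (1 - p * (starRingEnd ℂ) z) * ((starRingEnd ℂ) z)⁻¹ := by
    field_simp
  rw [this, norm_mul, norm_inv, Complex.norm_conj, div_eq_mul_inv]

lemma SU_ne_zero (p z : ℂ) (r : ℝ) (h : (‖p‖) ^ 2 - r ^ 2 = 1)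
    (hz : ‖z - p‖ ≤ r) : z ≠ 0 := by
  rintro rfl
  simp only [zero_sub, norm_neg] at hz
  nlinarith [norm_nonneg p]

lemma SU_inv (z : ℂ) (hz : z ≠ 0) :
    ((starRingEnd ℂ) (((starRingEnd ℂ) z)⁻¹))⁻¹ = z := by
  rw [map_inv₀, Complex.conj_conj, inv_inv]

/-- If `|p|² − r² = 1`, the Möbius map `z ↦ 1/conj(z)` (inversion in the unit
circle) maps the circle of center `p` and radius `r` onto itself, and maps the
corresponding closed disk onto itself. -/
theorem SU_preserves_circle (p : ℂ) (r : ℝ) (hr : 0 < r)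
    (h : ‖p‖ ^ 2 - r ^ 2 = 1) :
    (fun z : ℂ => ((starRingEnd ℂ) z)⁻¹) '' {z | ‖z - p‖ = r}
      = {z | ‖z - p‖ = r} ∧
    (fun z : ℂ => ((starRingEnd ℂ) z)⁻¹) '' {z | ‖z - p‖ ≤ r}
      = {z | ‖z - p‖ ≤ r} := by
  have hns : Complex.normSq p - r ^ 2 = 1 := by
    rw [← Complex.sq_norm]; exact h
  -- main equivalence: for z ≠ 0, |f z − p|² − r² has the same sign as |z−p|² − r²
  have main : ∀ z : ℂ, z ≠ 0 →
      (‖((starRingEnd ℂ) z)⁻¹ - p‖) ^ 2 - r ^ 2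
        = ((‖z - p‖) ^ 2 - r ^ 2) / (‖z‖) ^ 2 := by
    intro z hz
    have haz : ‖z‖ ≠ 0 := norm_ne_zero_iff.mpr hz
    have hz2 : (‖z‖) ^ 2 ≠ 0 := pow_ne_zero 2 haz
    rw [SU_abs p z hz, div_pow, eq_div_iff hz2, sub_mul, div_mul_cancel₀ _ hz2]
    have := SU_key p z r hns
    rw [Complex.sq_norm, Complex.sq_norm, Complex.sq_norm]
    linarith
  have hcirc : ∀ z : ℂ, ‖z - p‖ = r →
      ‖((starRingEnd ℂ) z)⁻¹ - p‖ = r := by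
    intro z hz
    have hz0 : z ≠ 0 := SU_ne_zero p z r h hz.le
    have := main z hz0
    rw [hz, sub_self, zero_div, sub_eq_zero] at this
    have h1 : ‖((starRingEnd ℂ) z)⁻¹ - p‖ ≥ 0 := norm_nonneg _
    nlinarith
  have hdisk : ∀ z : ℂ, ‖z - p‖ ≤ r →
      ‖((starRingEnd ℂ) z)⁻¹ - p‖ ≤ r := by
    intro z hz
    have hz0 : z ≠ 0 := SU_ne_zero p z r h hz
    have := main z hz0
    have hle : (‖z - p‖) ^ 2 - r ^ 2 ≤ 0 := by
      nlinarith [norm_nonneg (z - p)]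
    have haz : 0 < ‖z‖ := norm_pos_iff.mpr hz0
    have hz2 : (0:ℝ) < (‖z‖) ^ 2 := pow_pos haz 2
    have : (‖((starRingEnd ℂ) z)⁻¹ - p‖) ^ 2 - r ^ 2 ≤ 0 := by
      rw [this]; exact div_nonpos_of_nonpos_of_nonneg hle hz2.le
    nlinarith [norm_nonneg (((starRingEnd ℂ) z)⁻¹ - p)]
  constructor
  · apply Set.Subset.antisymm
    · rintro _ ⟨z, hz, rfl⟩; exact hcirc z hz
    · intro z hz
      have hz0 : z ≠ 0 := SU_ne_zero p z r h hz.le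
      refine ⟨((starRingEnd ℂ) z)⁻¹, hcirc z hz, SU_inv z hz0⟩
  · apply Set.Subset.antisymm
    · rintro _ ⟨z, hz, rfl⟩; exact hdisk z hz
    · intro z hz
      have hz0 : z ≠ 0 := SU_ne_zero p z r h hz
      refine ⟨((starRingEnd ℂ) z)⁻¹, hdisk z hz, SU_inv z hz0⟩
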